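/- Let $V:[0,\infty)\to[0,\infty)$ be a continuously differentiable function satisfying $\dot V(t) \le -\eta_1 V(t)^{k_1} - \eta_2 V(t)^{k_2}$ for all $t\ge 0$, where $\eta_1,\eta_2>0$, $k_1>1$, $0<k_2<1$. Then $V(t)=0$ for all $t \ge T_{\max}$, where $T_{\max} = \frac{1}{\eta_1(k_1-1)} + \frac{1}{\eta_2(1-k_2)}$, independently of $V(0)$. -/

import Mathlib

open Set Real

lemma comp_le_aux {f f' : ℝ → ℝ} {a b r : ℝ} (hab : a ≤ b)
    (hd : ∀ s ∈ Set.Icc a b, HasDerivAt f (f' s) s)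
    (hle : ∀ s ∈ Set.Icc a b, f' s ≤ -r) : f b ≤ f a - r * (b - a) := by
  have key : AntitoneOn (fun s => f s + r * s) (Set.Icc a b) := by
    apply antitoneOn_of_deriv_nonpos (convex_Icc a b)
    · exact fun x hx =>
        ((hd x hx).add ((hasDerivAt_id x).const_mul r)).continuousAt.continuousWithinAt
    · intro x hx
      rw [interior_Icc] at hx
      have hx' : x ∈ Set.Icc a b := ⟨hx.1.le, hx.2.le⟩
      exact ((hd x hx').add
        ((hasDerivAt_id x).const_mul r)).differentiableAt.differentiableWithinAt
    · intro x hx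
      rw [interior_Icc] at hx
      have hx' : x ∈ Set.Icc a b := ⟨hx.1.le, hx.2.le⟩
      have H : HasDerivAt (fun s => f s + r * s) (f' x + r * 1) x := by
        exact (hd x hx').add ((hasDerivAt_id x).const_mul r)
      rw [H.deriv]
      have := hle x hx'
      simp only [mul_one]
      linarith
  have h := key ⟨le_refl a, hab⟩ ⟨hab, le_refl b⟩ hab
  simp only at h
  linarith

lemma comp_ge_aux {f f' : ℝ → ℝ} {a b r : ℝ} (hab : a ≤ b)
    (hd : ∀ s ∈ Set.Icc a b, HasDerivAt f (f' s) s)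
    (hge : ∀ s ∈ Set.Icc a b, r ≤ f' s) : f a + r * (b - a) ≤ f b := by
  have h := comp_le_aux (f := fun s => -f s) (f' := fun s => -f' s) (r := r) hab
    (fun s hs => (hd s hs).neg) (fun s hs => by have := hge s hs; linarith)
  linarith

theorem stmt_0 (V V' : ℝ → ℝ) (η1 η2 k1 k2 : ℝ)
    (hη1 : 0 < η1) (hη2 : 0 < η2) (hk1 : 1 < k1) (hk2 : 0 < k2) (hk2' : k2 < 1)
    (hVnn : ∀ t, 0 ≤ t → 0 ≤ V t)
    (hderiv : ∀ t, 0 ≤ t → HasDerivAt V (V' t) t)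
    (hineq : ∀ t, 0 ≤ t → V' t ≤ -η1 * (V t) ^ k1 - η2 * (V t) ^ k2) :
    ∀ t, 1 / (η1 * (k1 - 1)) + 1 / (η2 * (1 - k2)) ≤ t → V t = 0 := by
  intro t ht
  set T1 : ℝ := 1 / (η1 * (k1 - 1)) with hT1def
  set T2 : ℝ := 1 / (η2 * (1 - k2)) with hT2def
  have hd1 : 0 < η1 * (k1 - 1) := mul_pos hη1 (by linarith)
  have hd2 : 0 < η2 * (1 - k2) := mul_pos hη2 (by linarith)
  have hT1pos : 0 < T1 := by positivity
  have hT2pos : 0 < T2 := by positivity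
  have htpos : (0:ℝ) ≤ t := by linarith
  -- antitone on Ici 0
  have hanti : AntitoneOn V (Set.Ici 0) := by
    apply antitoneOn_of_deriv_nonpos (convex_Ici 0)
    · exact fun x hx => (hderiv x hx).continuousAt.continuousWithinAt
    · intro x hx
      rw [interior_Ici] at hx
      exact (hderiv x hx.le).differentiableAt.differentiableWithinAt
    · intro x hx
      rw [interior_Ici] at hx
      rw [(hderiv x hx.le).deriv]
      have h1 := hineq x hx.le
      have h2 : (0:ℝ) ≤ V x ^ k1 := Real.rpow_nonneg (hVnn x hx.le) k1
      have h3 : (0:ℝ) ≤ V x ^ k2 := Real.rpow_nonneg (hVnn x hx.le) k2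
      nlinarith
  -- phase 1: there is t0 in [0, T1] with V t0 ≤ 1
  have hex : ∃ t0, t0 ∈ Set.Icc (0:ℝ) T1 ∧ V t0 ≤ 1 := by
    by_contra h
    push_neg at h
    have hbig : ∀ s ∈ Set.Icc (0:ℝ) T1, 1 < V s := fun s hs => h s hs
    have hd : ∀ s ∈ Set.Icc (0:ℝ) T1,
        HasDerivAt (fun u => V u ^ (1 - k1)) (V' s * (1 - k1) * V s ^ (1 - k1 - 1)) s := by
      intro s hs
      have hvpos : 0 < V s := lt_trans one_pos (hbig s hs)
      exact (hderiv s hs.1).rpow_const (Or.inl (ne_of_gt hvpos))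
    have hge : ∀ s ∈ Set.Icc (0:ℝ) T1,
        η1 * (k1 - 1) ≤ V' s * (1 - k1) * V s ^ (1 - k1 - 1) := by
      intro s hs
      have hvpos : 0 < V s := lt_trans one_pos (hbig s hs)
      have hA : 0 < V s ^ k1 := Real.rpow_pos_of_pos hvpos k1
      have hB : 0 < V s ^ (1 - k1 - 1) := Real.rpow_pos_of_pos hvpos _
      have hAB : V s ^ k1 * V s ^ (1 - k1 - 1) = 1 := by
        rw [← Real.rpow_add hvpos]
        have : k1 + (1 - k1 - 1) = 0 := by ring
        rw [this, Real.rpow_zero]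
      have hV' : V' s ≤ -η1 * V s ^ k1 := by
        have h1 := hineq s hs.1
        have h3 : (0:ℝ) ≤ V s ^ k2 := (Real.rpow_pos_of_pos hvpos k2).le
        nlinarith
      have H : 0 ≤ (k1 - 1) * V s ^ (1 - k1 - 1) * (-η1 * V s ^ k1 - V' s) :=
        mul_nonneg (mul_nonneg (by linarith) hB.le) (by linarith)
      calc η1 * (k1 - 1) = η1 * (k1 - 1) * (V s ^ k1 * V s ^ (1 - k1 - 1)) := by
            rw [hAB]; ring
        _ ≤ V' s * (1 - k1) * V s ^ (1 - k1 - 1) := by nlinarith [H]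
    have hcmp := comp_ge_aux hT1pos.le hd hge
    have hV0pos : 0 < V 0 := lt_trans one_pos (hbig 0 ⟨le_refl 0, hT1pos.le⟩)
    have h0pos : 0 < V 0 ^ (1 - k1) := Real.rpow_pos_of_pos hV0pos _
    have hT1val : η1 * (k1 - 1) * (T1 - 0) = 1 := by
      rw [hT1def, sub_zero, mul_one_div_cancel hd1.ne']
    have hlt1 : V T1 ^ (1 - k1) < 1 :=
      Real.rpow_lt_one_of_one_lt_of_neg (hbig T1 ⟨hT1pos.le, le_refl T1⟩) (by linarith)
    rw [hT1val] at hcmp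
    linarith
  obtain ⟨t0, ht0mem, ht0le⟩ := hex
  -- phase 2
  by_contra hVt
  have hc : 0 < V t := lt_of_le_of_ne (hVnn t htpos) (Ne.symm hVt)
  have ht0t : t0 ≤ t := le_trans ht0mem.2 (by linarith)
  have hpos : ∀ s ∈ Set.Icc t0 t, 0 < V s := by
    intro s hs
    have hs0 : (0:ℝ) ≤ s := le_trans ht0mem.1 hs.1
    have := hanti (Set.mem_Ici.2 hs0) (Set.mem_Ici.2 htpos) hs.2
    linarith
  have hd : ∀ s ∈ Set.Icc t0 t,
      HasDerivAt (fun u => V u ^ (1 - k2)) (V' s * (1 - k2) * V s ^ (1 - k2 - 1)) s := by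
    intro s hs
    exact (hderiv s (le_trans ht0mem.1 hs.1)).rpow_const (Or.inl (ne_of_gt (hpos s hs)))
  have hle : ∀ s ∈ Set.Icc t0 t,
      V' s * (1 - k2) * V s ^ (1 - k2 - 1) ≤ -(η2 * (1 - k2)) := by
    intro s hs
    have hvpos : 0 < V s := hpos s hs
    have hs0 : (0:ℝ) ≤ s := le_trans ht0mem.1 hs.1
    have hA : 0 < V s ^ k2 := Real.rpow_pos_of_pos hvpos k2
    have hB : 0 < V s ^ (1 - k2 - 1) := Real.rpow_pos_of_pos hvpos _
    have hAB : V s ^ k2 * V s ^ (1 - k2 - 1) = 1 := by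
      rw [← Real.rpow_add hvpos]
      have : k2 + (1 - k2 - 1) = 0 := by ring
      rw [this, Real.rpow_zero]
    have hV' : V' s ≤ -η2 * V s ^ k2 := by
      have h1 := hineq s hs0
      have h3 : (0:ℝ) ≤ V s ^ k1 := (Real.rpow_pos_of_pos hvpos k1).le
      nlinarith
    have H : 0 ≤ (1 - k2) * V s ^ (1 - k2 - 1) * (-η2 * V s ^ k2 - V' s) :=
      mul_nonneg (mul_nonneg (by linarith) hB.le) (by linarith)
    calc V' s * (1 - k2) * V s ^ (1 - k2 - 1)
        ≤ -η2 * (1 - k2) * (V s ^ k2 * V s ^ (1 - k2 - 1)) := by nlinarith [H]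
      _ = -(η2 * (1 - k2)) := by rw [hAB]; ring
  have hcmp := comp_le_aux ht0t hd hle
  have hgt0le : V t0 ^ (1 - k2) ≤ 1 :=
    Real.rpow_le_one (hVnn t0 ht0mem.1) ht0le (by linarith)
  have hT2val : (1:ℝ) ≤ η2 * (1 - k2) * (t - t0) := by
    have h1 : T2 ≤ t - t0 := by linarith [ht0mem.2]
    have h2 : η2 * (1 - k2) * T2 = 1 := by rw [hT2def, mul_one_div_cancel hd2.ne']
    nlinarith
  have hgtpos : 0 < V t ^ (1 - k2) := Real.rpow_pos_of_pos hc _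
  linarith
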